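/- The code 𝒮₃ := {{1,2,3},{1,4},{2,4},{3,4},{1},{2},{3},{4},∅} has no open convex realization in ℝ²: there is no family U₁,…,U₄ of open convex subsets of ℝ² with code(U₁,…,U₄) = 𝒮₃. Consequently odim(𝒮₃) = 3. -/

import Mathlib

/-- The code of a family of sets. -/
def code {X : Type*} {n : ℕ} (U : Fin n → Set X) : Set (Finset (Fin n)) :=
  {σ | ∃ p : X, ∀ i, p ∈ U i ↔ i ∈ σ}

/-- The code `𝒮₃`, on neurons `0,…,3` (representing `1,…,4`). -/
def S3 : Set (Finset (Fin 4)) :=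
  {{0,1,2}, {0,3}, {1,3}, {2,3}, {0}, {1}, {2}, {3}, ∅}

namespace S3Aux

abbrev E2 := Fin 2 → ℝ

/-- On a segment inside a convex set lying in the level set `f = γ`, every
intermediate `g`-value is attained. Sorted version. -/
lemma seg_point_sorted {A : Set E2} (hA : Convex ℝ A) (f g : E2 →L[ℝ] ℝ) {γ v : ℝ} {a b : E2}
    (ha : a ∈ A) (hb : b ∈ A) (hfa : f a = γ) (hfb : f b = γ)
    (h1 : g a ≤ v) (h2 : v ≤ g b) : ∃ y ∈ A, f y = γ ∧ g y = v := by
  rcases eq_or_lt_of_le (h1.trans h2) with h | hlt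
  · exact ⟨a, ha, hfa, le_antisymm h1 (h ▸ h2)⟩
  · set t : ℝ := (v - g a) / (g b - g a) with ht
    have hden : 0 < g b - g a := by linarith
    have ht0 : 0 ≤ t := div_nonneg (by linarith) hden.le
    have ht1 : t ≤ 1 := by
      rw [ht, div_le_one hden]; linarith
    refine ⟨(1 - t) • a + t • b, hA ha hb (by linarith) ht0 (by ring), ?_, ?_⟩
    · simp only [map_add, map_smul, smul_eq_mul, hfa, hfb]; ring
    · have hne : g b - g a ≠ 0 := ne_of_gt hden
      simp only [map_add, map_smul, smul_eq_mul]
      rw [ht]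
      field_simp
      ring

/-- Unsorted version. -/
lemma seg_point {A : Set E2} (hA : Convex ℝ A) (f g : E2 →L[ℝ] ℝ) {γ v : ℝ} {a b : E2}
    (ha : a ∈ A) (hb : b ∈ A) (hfa : f a = γ) (hfb : f b = γ)
    (h1 : min (g a) (g b) ≤ v) (h2 : v ≤ max (g a) (g b)) :
    ∃ y ∈ A, f y = γ ∧ g y = v := by
  rcases le_total (g a) (g b) with h | h
  · exact seg_point_sorted hA f g ha hb hfa hfb (by simpa [min_eq_left h] using h1)
      (by simpa [max_eq_right h] using h2)
  · exact seg_point_sorted hA f g hb ha hfb hfa (by simpa [min_eq_right h] using h1)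
      (by simpa [max_eq_left h] using h2)

/-- Order lemma: if `A ∩ B` lies strictly below level `γ`, and there are witnesses
`x1 ∈ A`, `x2 ∈ B` on the level set with `g x1 < g x2`, then every level-`γ` point
of `A` lies strictly `g`-left of every level-`γ` point of `B`. -/
lemma order_lem {A B : Set E2} (hA : Convex ℝ A) (hB : Convex ℝ B)
    (f g : E2 →L[ℝ] ℝ) (hinj : ∀ p q : E2, f p = f q → g p = g q → p = q) {γ : ℝ}
    (hAB : ∀ p ∈ A ∩ B, f p < γ)
    {x1 x2 : E2} (hx1 : x1 ∈ A) (hx2 : x2 ∈ B) (hfx1 : f x1 = γ) (hfx2 : f x2 = γ)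
    (hg12 : g x1 < g x2) :
    ∀ a ∈ A, ∀ b ∈ B, f a = γ → f b = γ → g a < g b := by
  intro a ha b hb hfa hfb
  by_contra hcon
  push_neg at hcon
  have hne : g b ≤ g a := hcon
  set v : ℝ := max (g x1) (g b) with hv
  have hAv : ∃ y ∈ A, f y = γ ∧ g y = v := by
    refine seg_point hA f g hx1 ha hfx1 hfa ?_ ?_
    · exact le_trans (min_le_left _ _) (le_max_left _ _)
    · exact max_le (le_max_left _ _) (le_trans hne (le_max_right _ _))
  have hBv : ∃ y ∈ B, f y = γ ∧ g y = v := by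
    refine seg_point hB f g hx2 hb hfx2 hfb ?_ ?_
    · exact le_trans (min_le_right _ _) (le_max_right _ _)
    · exact max_le (le_trans hg12.le (le_max_left _ _)) (le_max_right _ _)
  obtain ⟨ya, hyaA, hfya, hgya⟩ := hAv
  obtain ⟨yb, hybB, hfyb, hgyb⟩ := hBv
  have : ya = yb := hinj ya yb (by rw [hfya, hfyb]) (by rw [hgya, hgyb])
  have hlt := hAB ya ⟨hyaA, this ▸ hybB⟩
  rw [hfya] at hlt
  exact lt_irrefl _ hlt

/-- Combination of a point and a target rewritten as a convex combination. -/
lemma comb_eq (w q : E2) (s : ℝ) : w + s • (q - w) = (1 - s) • w + s • q := by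
  funext j
  simp only [Pi.add_apply, Pi.smul_apply, Pi.sub_apply, smul_eq_mul]
  ring

set_option maxHeartbeats 2000000 in
/-- The core geometric contradiction. -/
lemma core (f g : E2 →L[ℝ] ℝ)
    (hinj : ∀ p q : E2, f p = f q → g p = g q → p = q)
    {A B C W : Set E2} (hA : Convex ℝ A) (hB : Convex ℝ B) (hC : Convex ℝ C) (hBo : IsOpen B)
    {γ : ℝ}
    (hAB : ∀ p ∈ A ∩ B, f p < γ) (hAC : ∀ p ∈ A ∩ C, f p < γ) (hBC : ∀ p ∈ B ∩ C, f p < γ)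
    (hWA : W ⊆ A) (hWB : W ⊆ B) (hWC : W ⊆ C)
    (hWnear : ∀ ε > 0, ∃ w ∈ W, γ - ε < f w ∧ f w < γ)
    {qa qb qc : E2} (hqa : qa ∈ A) (hqb : qb ∈ B) (hqc : qc ∈ C)
    (hfqa : γ < f qa) (hfqb : γ < f qb) (hfqc : γ < f qc)
    {x1 x2 x3 : E2} (hx1 : x1 ∈ A) (hx2 : x2 ∈ B) (hx3 : x3 ∈ C)
    (hfx1 : f x1 = γ) (hfx2 : f x2 = γ) (hfx3 : f x3 = γ)
    (hg12 : g x1 < g x2) (hg23 : g x2 < g x3)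
    {v : E2} (hfv : f v = 0) (hgv : g v = 1) : False := by
  have ordAB := order_lem hA hB f g hinj hAB hx1 hx2 hfx1 hfx2 hg12
  have ordBC := order_lem hB hC f g hinj hBC hx2 hx3 hfx2 hfx3 hg23
  -- a second point of B on the level set, to the right of x2
  obtain ⟨r, hr, hball⟩ := Metric.isOpen_iff.1 hBo x2 hx2
  set δ : ℝ := r / (2 * (‖v‖ + 1)) with hδ
  have hnv : (0:ℝ) < ‖v‖ + 1 := by positivity
  have hδpos : 0 < δ := by positivity
  set b2 : E2 := x2 + δ • v with hb2
  have hb2mem : b2 ∈ B := by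
    apply hball
    rw [Metric.mem_ball, hb2, dist_eq_norm]
    have : x2 + δ • v - x2 = δ • v := by abel
    rw [this, norm_smul, Real.norm_eq_abs, abs_of_pos hδpos]
    calc δ * ‖v‖ ≤ δ * (‖v‖ + 1) := by
          apply mul_le_mul_of_nonneg_left (by linarith) hδpos.le
    _ = r / 2 := by rw [hδ]; field_simp
    _ < r := by linarith
  have hfb2 : f b2 = γ := by
    rw [hb2, map_add, map_smul, hfv, smul_eq_mul, mul_zero, add_zero, hfx2]
  have hgb2 : g b2 = g x2 + δ := by
    rw [hb2, map_add, map_smul, hgv, smul_eq_mul, mul_one]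
  -- constants
  set η : ℝ := min (f qa - γ) (min (f qb - γ) (f qc - γ)) with hη
  have hηpos : 0 < η := by
    apply lt_min (by linarith) (lt_min (by linarith) (by linarith))
  have hηa : η ≤ f qa - γ := min_le_left _ _
  have hηb : η ≤ f qb - γ := le_trans (min_le_right _ _) (min_le_left _ _)
  have hηc : η ≤ f qc - γ := le_trans (min_le_right _ _) (min_le_right _ _)
  set M : ℝ := max |g x1| |g x3| with hM
  have hM0 : 0 ≤ M := le_trans (abs_nonneg _) (le_max_left _ _)
  set R : ℝ := 2 * (M + |g qb|) with hR
  have hR0 : 0 ≤ R := by positivity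
  set K : ℝ := R + max |g qa| |g qc| + 1 with hK
  have hK0 : 0 < K := by positivity
  set ε : ℝ := min (η / 2) (η * δ / (4 * K)) with hε
  have hεpos : 0 < ε := lt_min (by positivity) (by positivity)
  obtain ⟨w, hwW, hw1, hw2⟩ := hWnear ε hεpos
  -- the three "feet" at level γ of the segments from w to the q's
  have key : ∀ (q : E2) (S : Set E2), Convex ℝ S → q ∈ S → w ∈ S → γ < f q → η ≤ f q - γ →
      ∃ s : ℝ, 0 < s ∧ s < 1 ∧ s ≤ ε / η ∧
        (w + s • (q - w)) ∈ S ∧ f (w + s • (q - w)) = γ ∧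
        g (w + s • (q - w)) = g w + s * (g q - g w) := by
    intro q S hS hqS hwS hfq hηq
    set s : ℝ := (γ - f w) / (f q - f w) with hs
    have hd : 0 < f q - f w := by linarith
    have hs0 : 0 < s := div_pos (by linarith) hd
    have hs1 : s < 1 := by
      rw [hs, div_lt_one hd]; linarith
    have hsε : s ≤ ε / η := by
      rw [hs]
      exact div_le_div₀ hεpos.le (by linarith) hηpos (by linarith)
    refine ⟨s, hs0, hs1, hsε, ?_, ?_, ?_⟩
    · rw [comb_eq]
      exact hS hwS hqS (by linarith) hs0.le (by ring)
    · rw [map_add, map_smul, map_sub, smul_eq_mul, hs]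
      field_simp; ring
    · rw [map_add, map_smul, map_sub, smul_eq_mul]
  obtain ⟨sa, hsa0, hsa1, hsaε, heaA, hfea, hgea⟩ :=
    key qa A hA hqa (hWA hwW) hfqa hηa
  obtain ⟨sb, hsb0, hsb1, hsbε, hebB, hfeb, hgeb⟩ :=
    key qb B hB hqb (hWB hwW) hfqb hηb
  obtain ⟨sc, hsc0, hsc1, hscε, hecC, hfec, hgec⟩ :=
    key qc C hC hqc (hWC hwW) hfqc hηc
  set ea := w + sa • (qa - w)
  set eb := w + sb • (qb - w)
  set ec := w + sc • (qc - w)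
  -- bounds on ε/η
  have hεη1 : ε / η ≤ 1 / 2 := by
    have : ε ≤ η / 2 := min_le_left _ _
    rw [div_le_div_iff₀ hηpos (by norm_num)]
    linarith
  have hεη2 : ε / η ≤ δ / (4 * K) := by
    have h1 : ε ≤ η * δ / (4 * K) := min_le_right _ _
    rw [div_le_div_iff₀ hηpos (by positivity)]
    calc ε * (4 * K) ≤ (η * δ / (4 * K)) * (4 * K) :=
          mul_le_mul_of_nonneg_right h1 (by positivity)
    _ = δ * η := by field_simp
  -- order facts
  have h1 : g ea < g x2 := ordAB ea heaA x2 hx2 hfea hfx2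
  have h2 : g b2 < g ec := ordBC b2 hb2mem ec hecC hfb2 hfec
  have h3 : g x1 < g eb := ordAB x1 hx1 eb hebB hfx1 hfeb
  have h4 : g eb < g x3 := ordBC eb hebB x3 hx3 hfeb hfx3
  -- bound |g w| ≤ R
  have hebM : |g w + sb * (g qb - g w)| ≤ M := by
    rw [← hgeb]
    rw [abs_le]
    constructor
    · have : -|g x1| ≤ g x1 := neg_abs_le _
      have h5 : -M ≤ -|g x1| := neg_le_neg (le_max_left _ _)
      linarith
    · have : g x3 ≤ |g x3| := le_abs_self _
      have h5 : |g x3| ≤ M := le_max_right _ _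
      linarith
  have hsbhalf : sb ≤ 1 / 2 := le_trans hsbε hεη1
  have hgwR : |g w| ≤ R := by
    have hexp : (1 - sb) * g w = (g w + sb * (g qb - g w)) - sb * g qb := by ring
    have h5 : |(1 - sb) * g w| ≤ M + |g qb| := by
      rw [hexp]
      calc |(g w + sb * (g qb - g w)) - sb * g qb|
          ≤ |g w + sb * (g qb - g w)| + |sb * g qb| := abs_sub _ _
      _ ≤ M + |sb * g qb| := by linarith [hebM]
      _ ≤ M + |g qb| := by
          have h9 : |sb * g qb| = sb * |g qb| := by
            rw [abs_mul, abs_of_pos hsb0]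
          have h10 : sb * |g qb| ≤ |g qb| :=
            mul_le_of_le_one_left (abs_nonneg _) hsb1.le
          rw [h9]; linarith
    rw [abs_mul, abs_of_pos (by linarith : (0:ℝ) < 1 - sb)] at h5
    have h11 : (1/2 : ℝ) * |g w| ≤ (1 - sb) * |g w| :=
      mul_le_mul_of_nonneg_right (by linarith) (abs_nonneg _)
    rw [hR]; linarith
  -- final computation
  have hsaK : sa ≤ δ / (4 * K) := le_trans hsaε hεη2
  have hscK : sc ≤ δ / (4 * K) := le_trans hscε hεη2
  have hbig : δ < g ec - g ea := by
    have := sub_lt_sub h2 h1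
    rw [hgb2] at this
    linarith
  have hterm : g ec - g ea ≤ δ / 2 := by
    rw [hgec, hgea]
    have hta : |sa * (g qa - g w)| ≤ δ / 4 := by
      rw [abs_mul, abs_of_pos hsa0]
      have h6 : |g qa - g w| ≤ |g qa| + |g w| := abs_sub _ _
      have h7 : |g qa - g w| ≤ K := by
        have : |g qa| ≤ max |g qa| |g qc| := le_max_left _ _
        rw [hK]; linarith [hgwR]
      calc sa * |g qa - g w| ≤ (δ / (4 * K)) * K := by
            apply mul_le_mul hsaK h7 (abs_nonneg _) (by positivity)
      _ = δ / 4 := by field_simp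
    have htc : |sc * (g qc - g w)| ≤ δ / 4 := by
      rw [abs_mul, abs_of_pos hsc0]
      have h7 : |g qc - g w| ≤ K := by
        have h6 : |g qc - g w| ≤ |g qc| + |g w| := abs_sub _ _
        have : |g qc| ≤ max |g qa| |g qc| := le_max_right _ _
        rw [hK]; linarith [hgwR]
      calc sc * |g qc - g w| ≤ (δ / (4 * K)) * K := by
            apply mul_le_mul hscK h7 (abs_nonneg _) (by positivity)
      _ = δ / 4 := by field_simp
    have e1 : g w + sc * (g qc - g w) - (g w + sa * (g qa - g w))
        = sc * (g qc - g w) - sa * (g qa - g w) := by ring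
    rw [e1]
    have := abs_le.1 hta
    have := abs_le.1 htc
    linarith
  linarith

set_option maxHeartbeats 1000000 in
/-- `𝒮₃` has no open convex realization in the plane. -/
theorem no2 : ¬ ∃ U : Fin 4 → Set E2,
    (∀ i, IsOpen (U i) ∧ Convex ℝ (U i)) ∧ code U = S3 := by
  rintro ⟨U, hU, hcode⟩
  classical
  set σf : E2 → Finset (Fin 4) := fun p => Finset.univ.filter (fun j => p ∈ U j) with hσf
  have hmem : ∀ p : E2, ∀ i, p ∈ U i ↔ i ∈ σf p := by
    intro p i; simp [hσf]
  have hσ : ∀ p : E2, σf p ∈ S3 := by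
    intro p; rw [← hcode]; exact ⟨p, hmem p⟩
  have hσ9 : ∀ p : E2, σf p = {0,1,2} ∨ σf p = {0,3} ∨ σf p = {1,3} ∨ σf p = {2,3} ∨
      σf p = {0} ∨ σf p = {1} ∨ σf p = {2} ∨ σf p = {3} ∨ σf p = ∅ := by
    intro p
    have h := hσ p
    simpa [S3, Set.mem_insert_iff, Set.mem_singleton_iff] using h
  have haux : ∀ σ : Finset (Fin 4),
      (σ = {0,1,2} ∨ σ = {0,3} ∨ σ = {1,3} ∨ σ = {2,3} ∨
        σ = {0} ∨ σ = {1} ∨ σ = {2} ∨ σ = {3} ∨ σ = ∅) →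
      ∀ i j : Fin 4, i ≠ j → i ≠ 3 → j ≠ 3 → i ∈ σ → j ∈ σ → σ = {0,1,2} := by decide
  have hpat : ∀ (p : E2) (i j : Fin 4), i ≠ j → i ≠ 3 → j ≠ 3 → p ∈ U i → p ∈ U j →
      p ∈ U 0 ∧ p ∈ U 1 ∧ p ∈ U 2 ∧ p ∉ U 3 := by
    intro p i j hij hi3 hj3 hpi hpj
    have h9 := haux (σf p) (hσ9 p) i j hij hi3 hj3 ((hmem p i).1 hpi) ((hmem p j).1 hpj)
    refine ⟨(hmem p 0).2 ?_, (hmem p 1).2 ?_, (hmem p 2).2 ?_, fun hc => ?_⟩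
    · rw [h9]; decide
    · rw [h9]; decide
    · rw [h9]; decide
    · have h3 := (hmem p 3).1 hc; rw [h9] at h3; exact absurd h3 (by decide)
  have hget : ∀ σ ∈ S3, ∃ p : E2, ∀ i, p ∈ U i ↔ i ∈ σ := by
    intro σ hσ'; rw [← hcode] at hσ'; exact hσ'
  obtain ⟨w0, hw0⟩ := hget {0,1,2} (by left; rfl)
  obtain ⟨qA, hqA⟩ := hget {0,3} (by right; left; rfl)
  obtain ⟨qB, hqB⟩ := hget {1,3} (by right; right; left; rfl)
  obtain ⟨qC, hqC⟩ := hget {2,3} (by right; right; right; left; rfl)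
  set W : Set E2 := U 0 ∩ U 1 ∩ U 2 with hWdef
  have hw0W : w0 ∈ W :=
    ⟨⟨(hw0 0).2 (by decide), (hw0 1).2 (by decide)⟩, (hw0 2).2 (by decide)⟩
  have hqA0 : qA ∈ U 0 := (hqA 0).2 (by decide)
  have hqA3 : qA ∈ U 3 := (hqA 3).2 (by decide)
  have hqB1 : qB ∈ U 1 := (hqB 1).2 (by decide)
  have hqB3 : qB ∈ U 3 := (hqB 3).2 (by decide)
  have hqC2 : qC ∈ U 2 := (hqC 2).2 (by decide)
  have hqC3 : qC ∈ U 3 := (hqC 3).2 (by decide)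
  have hWo : IsOpen W := (((hU 0).1.inter (hU 1).1).inter (hU 2).1)
  have hWc : Convex ℝ W := (((hU 0).2.inter (hU 1).2).inter (hU 2).2)
  have hWU3 : Disjoint W (U 3) := by
    rw [Set.disjoint_left]
    intro p hp hp3
    exact (hpat p 0 1 (by decide) (by decide) (by decide) hp.1.1 hp.1.2).2.2.2 hp3
  obtain ⟨f, u, hfW, hfU3⟩ :=
    geometric_hahn_banach_open_open hWc hWo (hU 3).2 (hU 3).1 hWU3
  -- the sup of f over W
  set γ : ℝ := sSup (f '' W) with hγdef
  have hbdd : BddAbove (f '' W) := ⟨u, by rintro y ⟨p, hp, rfl⟩; exact (hfW p hp).le⟩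
  have hne : (f '' W).Nonempty := ⟨f w0, w0, hw0W, rfl⟩
  have hγu : γ ≤ u := csSup_le hne (by rintro y ⟨p, hp, rfl⟩; exact (hfW p hp).le)
  have hfqAu : u < f qA := hfU3 qA hqA3
  have hfqBu : u < f qB := hfU3 qB hqB3
  have hfqCu : u < f qC := hfU3 qC hqC3
  have hγqA : γ < f qA := lt_of_le_of_lt hγu hfqAu
  have hγqB : γ < f qB := lt_of_le_of_lt hγu hfqBu
  have hγqC : γ < f qC := lt_of_le_of_lt hγu hfqCu
  -- every point of W is strictly below level γ
  have hfvplus : (0:ℝ) < f (qA - w0) := by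
    rw [map_sub]
    have := hfW w0 hw0W
    linarith
  have hWlt : ∀ p ∈ W, f p < γ := by
    intro p hp
    obtain ⟨r, hr, hball⟩ := Metric.isOpen_iff.1 hWo p hp
    set t : ℝ := r / (2 * (‖qA - w0‖ + 1)) with htdef
    have hnv : (0:ℝ) < ‖qA - w0‖ + 1 := by positivity
    have htpos : 0 < t := by positivity
    have hmem' : p + t • (qA - w0) ∈ W := by
      apply hball
      rw [Metric.mem_ball, dist_eq_norm]
      have he : p + t • (qA - w0) - p = t • (qA - w0) := by abel
      rw [he, norm_smul, Real.norm_eq_abs, abs_of_pos htpos]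
      calc t * ‖qA - w0‖ ≤ t * (‖qA - w0‖ + 1) :=
            mul_le_mul_of_nonneg_left (by linarith) htpos.le
      _ = r / 2 := by rw [htdef]; field_simp
      _ < r := by linarith
    have hlt : f p < f (p + t • (qA - w0)) := by
      rw [map_add, map_smul, smul_eq_mul]
      have := mul_pos htpos hfvplus
      linarith
    exact lt_of_lt_of_le hlt (le_csSup hbdd ⟨_, hmem', rfl⟩)
  have hWnear : ∀ ε > 0, ∃ w ∈ W, γ - ε < f w ∧ f w < γ := by
    intro ε hε
    obtain ⟨y, ⟨p, hp, rfl⟩, hy⟩ := exists_lt_of_lt_csSup hne (by linarith [sub_lt_self γ hε] : γ - ε < sSup (f '' W))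
    exact ⟨p, hp, hy, hWlt p hp⟩
  -- coordinates
  set a : ℝ := f ![1, 0] with hadef
  set b : ℝ := f ![0, 1] with hbdef
  have fdecomp : ∀ p : E2, f p = p 0 * a + p 1 * b := by
    intro p
    have hp : p = p 0 • ![(1:ℝ), 0] + p 1 • ![0, 1] := by
      funext j
      fin_cases j <;> simp
    calc f p = f (p 0 • ![(1:ℝ), 0] + p 1 • ![0, 1]) := by rw [← hp]
    _ = p 0 * a + p 1 * b := by
        rw [map_add, map_smul, map_smul, smul_eq_mul, smul_eq_mul]
  have hab : 0 < a ^ 2 + b ^ 2 := by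
    rcases lt_or_eq_of_le (by positivity : (0:ℝ) ≤ a ^ 2 + b ^ 2) with h | h
    · exact h
    · exfalso
      have ha : a = 0 := by nlinarith [sq_nonneg a, sq_nonneg b]
      have hb : b = 0 := by nlinarith [sq_nonneg a, sq_nonneg b]
      have h1 : f w0 = 0 := by rw [fdecomp, ha, hb]; ring
      have h2 : f qA = 0 := by rw [fdecomp, ha, hb]; ring
      have := hfW w0 hw0W
      rw [h1] at this; rw [h2] at hfqAu
      linarith
  set g : E2 →L[ℝ] ℝ :=
    (-b) • ContinuousLinearMap.proj 0 + a • ContinuousLinearMap.proj 1 with hgdef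
  have gval : ∀ p : E2, g p = -b * p 0 + a * p 1 := by
    intro p
    simp [hgdef, ContinuousLinearMap.proj_apply, smul_eq_mul]
  have hinj : ∀ p q : E2, f p = f q → g p = g q → p = q := by
    intro p q hf hg
    rw [fdecomp p, fdecomp q] at hf
    rw [gval p, gval q] at hg
    have h1 : (p 0 - q 0) * a + (p 1 - q 1) * b = 0 := by linarith
    have h2 : -b * (p 0 - q 0) + a * (p 1 - q 1) = 0 := by linarith
    have hx0 : (a ^ 2 + b ^ 2) * (p 0 - q 0) = 0 := by linear_combination a * h1 - b * h2
    have hy0 : (a ^ 2 + b ^ 2) * (p 1 - q 1) = 0 := by linear_combination b * h1 + a * h2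
    have hx : p 0 = q 0 := by
      rcases mul_eq_zero.1 hx0 with h | h
      · exact absurd h (ne_of_gt hab)
      · linarith
    have hy : p 1 = q 1 := by
      rcases mul_eq_zero.1 hy0 with h | h
      · exact absurd h (ne_of_gt hab)
      · linarith
    funext j
    fin_cases j
    · exact hx
    · exact hy
  set v : E2 := (a ^ 2 + b ^ 2)⁻¹ • ![-b, a] with hvdef
  have hv0 : v 0 = (a ^ 2 + b ^ 2)⁻¹ * (-b) := by simp [hvdef]
  have hv1 : v 1 = (a ^ 2 + b ^ 2)⁻¹ * a := by simp [hvdef]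
  have hfv : f v = 0 := by
    rw [fdecomp, hv0, hv1]; ring
  have hgv : g v = 1 := by
    rw [gval, hv0, hv1]
    field_simp
    ring
  -- level points
  have hxi : ∀ (q : E2) (S : Set E2), Convex ℝ S → w0 ∈ S → q ∈ S → γ < f q →
      ∃ x ∈ S, f x = γ := by
    intro q S hS hw hq hfq
    have hfw0γ : f w0 < γ := hWlt w0 hw0W
    set s : ℝ := (γ - f w0) / (f q - f w0) with hsdef
    have hd : 0 < f q - f w0 := by linarith
    have hs0 : 0 < s := div_pos (by linarith) hd
    have hs1 : s < 1 := by rw [hsdef, div_lt_one hd]; linarith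
    refine ⟨w0 + s • (q - w0), ?_, ?_⟩
    · rw [comb_eq]
      exact hS hw hq (by linarith) hs0.le (by ring)
    · rw [map_add, map_smul, map_sub, smul_eq_mul, hsdef]
      field_simp; ring
  obtain ⟨xA, hxAS, hfxA⟩ := hxi qA (U 0) (hU 0).2 hw0W.1.1 hqA0 hγqA
  obtain ⟨xB, hxBS, hfxB⟩ := hxi qB (U 1) (hU 1).2 hw0W.1.2 hqB1 hγqB
  obtain ⟨xC, hxCS, hfxC⟩ := hxi qC (U 2) (hU 2).2 hw0W.2 hqC2 hγqC
  -- pairwise low hypotheses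
  have hP01 : ∀ p ∈ U 0 ∩ U 1, f p < γ := fun p hp => by
    have h := hpat p 0 1 (by decide) (by decide) (by decide) hp.1 hp.2
    exact hWlt p ⟨⟨h.1, h.2.1⟩, h.2.2.1⟩
  have hP02 : ∀ p ∈ U 0 ∩ U 2, f p < γ := fun p hp => by
    have h := hpat p 0 2 (by decide) (by decide) (by decide) hp.1 hp.2
    exact hWlt p ⟨⟨h.1, h.2.1⟩, h.2.2.1⟩
  have hP12 : ∀ p ∈ U 1 ∩ U 2, f p < γ := fun p hp => by
    have h := hpat p 1 2 (by decide) (by decide) (by decide) hp.1 hp.2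
    exact hWlt p ⟨⟨h.1, h.2.1⟩, h.2.2.1⟩
  have sym : ∀ {S T : Set E2}, (∀ p ∈ S ∩ T, f p < γ) → ∀ p ∈ T ∩ S, f p < γ :=
    fun h p hp => h p ⟨hp.2, hp.1⟩
  have hW0 : W ⊆ U 0 := fun p hp => hp.1.1
  have hW1 : W ⊆ U 1 := fun p hp => hp.1.2
  have hW2 : W ⊆ U 2 := fun p hp => hp.2
  -- distinctness of the g-values
  have hgne : ∀ (x y : E2) (i j : Fin 4), i ≠ j → i ≠ 3 → j ≠ 3 → x ∈ U i → y ∈ U j →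
      f x = γ → f y = γ → g x ≠ g y := by
    intro x y i j hij hi3 hj3 hxi' hyj hfx hfy hg
    have hxy : x = y := hinj x y (by rw [hfx, hfy]) hg
    have h := hpat x i j hij hi3 hj3 hxi' (hxy ▸ hyj)
    have := hWlt x ⟨⟨h.1, h.2.1⟩, h.2.2.1⟩
    rw [hfx] at this
    exact lt_irrefl _ this
  have hneAB : g xA ≠ g xB := hgne xA xB 0 1 (by decide) (by decide) (by decide) hxAS hxBS hfxA hfxB
  have hneAC : g xA ≠ g xC := hgne xA xC 0 2 (by decide) (by decide) (by decide) hxAS hxCS hfxA hfxC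
  have hneBC : g xB ≠ g xC := hgne xB xC 1 2 (by decide) (by decide) (by decide) hxBS hxCS hfxB hfxC
  -- six orderings
  rcases lt_trichotomy (g xA) (g xB) with h01 | h01 | h01
  · rcases lt_trichotomy (g xB) (g xC) with h12 | h12 | h12
    · -- A < B < C
      exact core f g hinj (hU 0).2 (hU 1).2 (hU 2).2 (hU 1).1 hP01 hP02 hP12
        hW0 hW1 hW2 hWnear hqA0 hqB1 hqC2 hγqA hγqB hγqC hxAS hxBS hxCS
        hfxA hfxB hfxC h01 h12 hfv hgv
    · exact absurd h12 hneBC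
    · rcases lt_trichotomy (g xA) (g xC) with h02 | h02 | h02
      · -- A < C < B
        exact core f g hinj (hU 0).2 (hU 2).2 (hU 1).2 (hU 2).1 hP02 hP01 (sym hP12)
          hW0 hW2 hW1 hWnear hqA0 hqC2 hqB1 hγqA hγqC hγqB hxAS hxCS hxBS
          hfxA hfxC hfxB h02 h12 hfv hgv
      · exact absurd h02 hneAC
      · -- C < A < B
        exact core f g hinj (hU 2).2 (hU 0).2 (hU 1).2 (hU 0).1 (sym hP02) (sym hP12) hP01
          hW2 hW0 hW1 hWnear hqC2 hqA0 hqB1 hγqC hγqA hγqB hxCS hxAS hxBS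
          hfxC hfxA hfxB h02 h01 hfv hgv
  · exact absurd h01 hneAB
  · rcases lt_trichotomy (g xA) (g xC) with h02 | h02 | h02
    · -- B < A < C
      exact core f g hinj (hU 1).2 (hU 0).2 (hU 2).2 (hU 0).1 (sym hP01) hP12 hP02
        hW1 hW0 hW2 hWnear hqB1 hqA0 hqC2 hγqB hγqA hγqC hxBS hxAS hxCS
        hfxB hfxA hfxC h01 h02 hfv hgv
    · exact absurd h02 hneAC
    · rcases lt_trichotomy (g xB) (g xC) with h12 | h12 | h12
      · -- B < C < A
        exact core f g hinj (hU 1).2 (hU 2).2 (hU 0).2 (hU 2).1 hP12 (sym hP01) (sym hP02)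
          hW1 hW2 hW0 hWnear hqB1 hqC2 hqA0 hγqB hγqC hγqA hxBS hxCS hxAS
          hfxB hfxC hfxA h12 h02 hfv hgv
      · exact absurd h12 hneBC
      · -- C < B < A
        exact core f g hinj (hU 2).2 (hU 1).2 (hU 0).2 (hU 1).1 (sym hP12) (sym hP02) (sym hP01)
          hW2 hW1 hW0 hWnear hqC2 hqB1 hqA0 hγqC hγqB hγqA hxCS hxBS hxAS
          hfxC hfxB hfxA h12 h01 hfv hgv



abbrev E3 := Fin 3 → ℝ

/-- The halfspaces of the 3-dimensional realization. -/
def A3 : Fin 3 → Set E3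
  | 0 => {p | p 2 + p 0 < 2}
  | 1 => {p | p 2 + p 1 < 2}
  | 2 => {p | p 2 - p 0 - p 1 < 2}

def U3 : Fin 4 → Set E3
  | 0 => A3 1 ∩ A3 2
  | 1 => A3 0 ∩ A3 2
  | 2 => A3 0 ∩ A3 1
  | 3 => {p | 2 < p 2}

lemma A3_open : ∀ j, IsOpen (A3 j) := by
  intro j
  fin_cases j
  · exact isOpen_lt (by fun_prop) continuous_const
  · exact isOpen_lt (by fun_prop) continuous_const
  · exact isOpen_lt (by fun_prop) continuous_const

lemma A3_convex : ∀ j, Convex ℝ (A3 j) := by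
  intro j
  fin_cases j
  · exact convex_halfSpace_lt ⟨fun x y => by simp; ring, fun c x => by simp [smul_eq_mul]; ring⟩ 2
  · exact convex_halfSpace_lt ⟨fun x y => by simp; ring, fun c x => by simp [smul_eq_mul]; ring⟩ 2
  · exact convex_halfSpace_lt ⟨fun x y => by simp; ring, fun c x => by simp [smul_eq_mul]; ring⟩ 2

lemma U3_open_convex : ∀ i, IsOpen (U3 i) ∧ Convex ℝ (U3 i) := by
  intro i
  fin_cases i
  · exact ⟨(A3_open 1).inter (A3_open 2), (A3_convex 1).inter (A3_convex 2)⟩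
  · exact ⟨(A3_open 0).inter (A3_open 2), (A3_convex 0).inter (A3_convex 2)⟩
  · exact ⟨(A3_open 0).inter (A3_open 1), (A3_convex 0).inter (A3_convex 1)⟩
  · exact ⟨isOpen_lt continuous_const (continuous_apply 2),
      convex_halfSpace_gt ⟨fun x y => by simp, fun c x => by simp [smul_eq_mul]⟩ 2⟩

lemma U3_code : code U3 = S3 := by
  ext σ
  constructor
  · rintro ⟨p, hp⟩
    have h0 : p ∈ A3 0 ↔ p 2 + p 0 < 2 := Iff.rfl
    by_cases c0 : p 2 + p 0 < 2 <;> by_cases c1 : p 2 + p 1 < 2 <;>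
      by_cases c2 : p 2 - p 0 - p 1 < 2 <;> by_cases c3 : 2 < p 2
    · exfalso; linarith
    · have hs : σ = {0,1,2} := by
        ext i
        rw [← hp i]
        fin_cases i <;> simp [U3, A3] <;> (try constructor) <;> intros <;> first | tauto | linarith
      rw [hs]; left; rfl
    · have hs : σ = {2,3} := by
        ext i
        rw [← hp i]
        fin_cases i <;> simp [U3, A3] <;> (try constructor) <;> intros <;> first | tauto | linarith
      rw [hs]; right; right; right; left; rfl
    · have hs : σ = {2} := by
        ext i
        rw [← hp i]
        fin_cases i <;> simp [U3, A3] <;> (try constructor) <;> intros <;> first | tauto | linarith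
      rw [hs]; right; right; right; right; right; right; left; rfl
    · have hs : σ = {1,3} := by
        ext i
        rw [← hp i]
        fin_cases i <;> simp [U3, A3] <;> (try constructor) <;> intros <;> first | tauto | linarith
      rw [hs]; right; right; left; rfl
    · have hs : σ = {1} := by
        ext i
        rw [← hp i]
        fin_cases i <;> simp [U3, A3] <;> (try constructor) <;> intros <;> first | tauto | linarith
      rw [hs]; right; right; right; right; right; left; rfl
    · have hs : σ = {3} := by
        ext i
        rw [← hp i]
        fin_cases i <;> simp [U3, A3] <;> (try constructor) <;> intros <;> first | tauto | linarith
      rw [hs]; right; right; right; right; right; right; right; left; rfl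
    · have hs : σ = ∅ := by
        ext i
        rw [← hp i]
        fin_cases i <;> simp [U3, A3] <;> (try constructor) <;> intros <;> first | tauto | linarith
      rw [hs]; right; right; right; right; right; right; right; right; rfl
    · have hs : σ = {0,3} := by
        ext i
        rw [← hp i]
        fin_cases i <;> simp [U3, A3] <;> (try constructor) <;> intros <;> first | tauto | linarith
      rw [hs]; right; left; rfl
    · have hs : σ = {0} := by
        ext i
        rw [← hp i]
        fin_cases i <;> simp [U3, A3] <;> (try constructor) <;> intros <;> first | tauto | linarith
      rw [hs]; right; right; right; right; left; rfl
    · have hs : σ = {3} := by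
        ext i
        rw [← hp i]
        fin_cases i <;> simp [U3, A3] <;> (try constructor) <;> intros <;> first | tauto | linarith
      rw [hs]; right; right; right; right; right; right; right; left; rfl
    · have hs : σ = ∅ := by
        ext i
        rw [← hp i]
        fin_cases i <;> simp [U3, A3] <;> (try constructor) <;> intros <;> first | tauto | linarith
      rw [hs]; right; right; right; right; right; right; right; right; rfl
    · have hs : σ = {3} := by
        ext i
        rw [← hp i]
        fin_cases i <;> simp [U3, A3] <;> (try constructor) <;> intros <;> first | tauto | linarith
      rw [hs]; right; right; right; right; right; right; right; left; rfl
    · have hs : σ = ∅ := by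
        ext i
        rw [← hp i]
        fin_cases i <;> simp [U3, A3] <;> (try constructor) <;> intros <;> first | tauto | linarith
      rw [hs]; right; right; right; right; right; right; right; right; rfl
    · have hs : σ = {3} := by
        ext i
        rw [← hp i]
        fin_cases i <;> simp [U3, A3] <;> (try constructor) <;> intros <;> first | tauto | linarith
      rw [hs]; right; right; right; right; right; right; right; left; rfl
    · have hs : σ = ∅ := by
        ext i
        rw [← hp i]
        fin_cases i <;> simp [U3, A3] <;> (try constructor) <;> intros <;> first | tauto | linarith
      rw [hs]; right; right; right; right; right; right; right; right; rfl
  · intro hσ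
    rcases hσ with h|h|h|h|h|h|h|h|h <;> subst h
    · exact ⟨![0,0,0], by intro i; fin_cases i <;> simp [U3, A3] <;> norm_num⟩
    · exact ⟨![6,-2,3], by intro i; fin_cases i <;> simp [U3, A3] <;> norm_num⟩
    · exact ⟨![-2,6,3], by intro i; fin_cases i <;> simp [U3, A3] <;> norm_num⟩
    · exact ⟨![-2,-2,3], by intro i; fin_cases i <;> simp [U3, A3] <;> norm_num⟩
    · exact ⟨![6,-2,0], by intro i; fin_cases i <;> simp [U3, A3] <;> norm_num⟩
    · exact ⟨![-2,6,0], by intro i; fin_cases i <;> simp [U3, A3] <;> norm_num⟩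
    · exact ⟨![-2,-2,0], by intro i; fin_cases i <;> simp [U3, A3] <;> norm_num⟩
    · exact ⟨![0,0,3], by intro i; fin_cases i <;> simp [U3, A3] <;> norm_num⟩
    · exact ⟨![6,6,0], by intro i; fin_cases i <;> simp [U3, A3] <;> norm_num⟩

/-- Realizations can be lifted to higher dimension by taking cylinders. -/
lemma cyl {d e : ℕ} (h : d ≤ e)
    (hd : ∃ U : Fin 4 → Set (Fin d → ℝ),
      (∀ i, IsOpen (U i) ∧ Convex ℝ (U i)) ∧ code U = S3) :
    ∃ U : Fin 4 → Set (Fin e → ℝ),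
      (∀ i, IsOpen (U i) ∧ Convex ℝ (U i)) ∧ code U = S3 := by
  obtain ⟨U, hU, hcode⟩ := hd
  set π : (Fin e → ℝ) → (Fin d → ℝ) := fun p k => p (Fin.castLE h k) with hπ
  have hπcont : Continuous π := continuous_pi fun k => continuous_apply _
  have hπlin : IsLinearMap ℝ π := ⟨fun x y => rfl, fun c x => rfl⟩
  refine ⟨fun i => π ⁻¹' U i, fun i => ⟨(hU i).1.preimage hπcont,
    (hU i).2.is_linear_preimage hπlin⟩, ?_⟩
  have hcodes : code (fun i => π ⁻¹' U i) = code U := by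
    ext σ
    constructor
    · rintro ⟨p, hp⟩
      exact ⟨π p, hp⟩
    · rintro ⟨p, hp⟩
      refine ⟨fun j => if hj : (j : ℕ) < d then p ⟨j, hj⟩ else 0, ?_⟩
      have hπp : π (fun j => if hj : (j : ℕ) < d then p ⟨j, hj⟩ else 0) = p := by
        funext k
        simp only [hπ]
        rw [dif_pos (show ((Fin.castLE h k : Fin e) : ℕ) < d from k.2)]
        congr 1
      intro i
      simp only [Set.mem_preimage, hπp]
      exact hp i
  rw [hcodes, hcode]

end S3Aux

/-- `𝒮₃` has no open convex realization in ℝ²; consequently its open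
embedding dimension is `3`. -/
theorem S3_no_open_realization_dim2 :
    (¬ ∃ U : Fin 4 → Set (Fin 2 → ℝ),
      (∀ i, IsOpen (U i) ∧ Convex ℝ (U i)) ∧ code U = S3) ∧
    sInf {d : ℕ | ∃ U : Fin 4 → Set (Fin d → ℝ),
      (∀ i, IsOpen (U i) ∧ Convex ℝ (U i)) ∧ code U = S3} = 3 := by
  refine ⟨S3Aux.no2, ?_⟩
  have h3 : 3 ∈ {d : ℕ | ∃ U : Fin 4 → Set (Fin d → ℝ),
      (∀ i, IsOpen (U i) ∧ Convex ℝ (U i)) ∧ code U = S3} :=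
    ⟨S3Aux.U3, S3Aux.U3_open_convex, S3Aux.U3_code⟩
  apply le_antisymm
  · exact Nat.sInf_le h3
  · apply le_csInf ⟨3, h3⟩
    intro b hb
    by_contra hlt
    push_neg at hlt
    have hb2 : b ≤ 2 := by omega
    exact S3Aux.no2 (S3Aux.cyl hb2 hb)
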